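/- For every s, k ∈ ℕ there exists α = α(s, k) ∈ ℝ satisfying the following. Let d ∈ ℕ and let H_1, …, H_s ⊆ ℝ^d be half-spaces (each either open, of the form {x̄ : Σ_j a_j x_j > b}, or closed, of the form {x̄ : Σ_j a_j x_j ≥ b}). Let 𝓕 be the family of all polytopes of the form ∩_{i ∈ [s]} (ȳ_i + H_i) over all translation vectors ȳ_1, …, ȳ_s ∈ ℝ^d. Then for any set P of n_1 points in ℝ^d and any finite list F of n_2 polytopes from 𝓕, if the incidence graph on P × F is K_{k,k}-free, then the number of incidences (pairs (p, Q) ∈ P × F with p ∈ Q) is at most α · n · log^s(n), where n = n_1 + n_2. -/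
import Mathlib


/-- The half-space `{x : Σ_j a_j x_j > b}` (if `opn = true`) or `{x : Σ_j a_j x_j ≥ b}`
(if `opn = false`) in `ℝ^d`. -/
def halfSpace {d : ℕ} (a : Fin d → ℝ) (b : ℝ) (opn : Bool) : Set (Fin d → ℝ) :=
  {x | if opn then b < ∑ j, a j * x j else b ≤ ∑ j, a j * x j}

/-- The polytope `⋂_{i ∈ [s]} (y_i + H_i)` cut out by the translates of the half-spaces
`H_i = halfSpace (a i) (b i) (opn i)` by the vectors `y i`. -/
def translatedPolytope {d s : ℕ} (a : Fin s → Fin d → ℝ) (b : Fin s → ℝ)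
    (opn : Fin s → Bool) (y : Fin s → Fin d → ℝ) : Set (Fin d → ℝ) :=
  ⋂ i : Fin s, {x | (fun j => x j - y i j) ∈ halfSpace (a i) (b i) (opn i)}


lemma median_split {Ω : Type} [DecidableEq Ω] (S : Finset Ω) (f : Ω → ℝ) (hS : S.Nonempty) :
    ∃ t : ℝ, (S.filter (fun x => f x < t)).card ≤ S.card / 2 ∧
      (S.filter (fun x => t < f x)).card ≤ S.card / 2 := by
  set n := S.card with hn
  set T : Finset ℝ := S.image f with hT
  have hTne : T.Nonempty := hS.image f
  set G : Finset ℝ := T.filter (fun v => n - n / 2 ≤ (S.filter (fun x => f x ≤ v)).card) with hG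
  have hGne : G.Nonempty := by
    refine ⟨T.max' hTne, Finset.mem_filter.2 ⟨T.max'_mem hTne, ?_⟩⟩
    have : S.filter (fun x => f x ≤ T.max' hTne) = S := by
      apply Finset.filter_true_of_mem
      intro x hx
      exact T.le_max' _ (Finset.mem_image_of_mem f hx)
    rw [this]; omega
  set t := G.min' hGne with ht
  have htG : t ∈ G := G.min'_mem hGne
  refine ⟨t, ?_, ?_⟩
  · by_cases hE : (S.filter (fun x => f x < t)).Nonempty
    · set E := S.filter (fun x => f x < t) with hEdef
      set u := (E.image f).max' (hE.image f) with hu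
      have huE : u ∈ E.image f := (E.image f).max'_mem (hE.image f)
      obtain ⟨x₀, hx₀, hfx₀⟩ := Finset.mem_image.1 huE
      have hx₀S : x₀ ∈ S := (Finset.mem_filter.1 hx₀).1
      have hut : u < t := by rw [← hfx₀]; exact (Finset.mem_filter.1 hx₀).2
      have huT : u ∈ T := by rw [← hfx₀]; exact Finset.mem_image_of_mem f hx₀S
      have huG : u ∉ G := fun h => absurd (G.min'_le u h) (not_le.2 hut)
      have hcard : (S.filter (fun x => f x ≤ u)).card < n - n / 2 := by
        by_contra h
        exact huG (Finset.mem_filter.2 ⟨huT, not_lt.1 fun hh => h (by omega)⟩)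
      have hsub : E ⊆ S.filter (fun x => f x ≤ u) := by
        intro x hx
        have hxS := (Finset.mem_filter.1 hx).1
        refine Finset.mem_filter.2 ⟨hxS, ?_⟩
        exact (E.image f).le_max' _ (Finset.mem_image_of_mem f hx)
      have := Finset.card_le_card hsub
      omega
    · rw [Finset.not_nonempty_iff_eq_empty.1 hE]; simp
  · have h1 : n - n / 2 ≤ (S.filter (fun x => f x ≤ t)).card := (Finset.mem_filter.1 htG).2
    have h2 := Finset.card_filter_add_card_filter_not (s := S) (p := fun x => f x ≤ t)
    have h3 : S.filter (fun a => ¬ f a ≤ t) = S.filter (fun x => t < f x) := by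
      apply Finset.filter_congr; intro x _; simp [not_le]
    rw [h3] at h2
    omega

/-- Dominance relation with per-coordinate strictness. -/
def DomRel {s : ℕ} (σ : Fin s → Bool) (x y : Fin s → ℝ) : Prop :=
  ∀ i, if σ i then y i < x i else y i ≤ x i

noncomputable instance {s : ℕ} (σ : Fin s → Bool) (x y : Fin s → ℝ) :
    Decidable (DomRel σ x y) := by unfold DomRel; infer_instance

lemma domrel_tail {s : ℕ} {σ : Fin (s+1) → Bool} {x y : Fin (s+1) → ℝ} (h : DomRel σ x y) :
    DomRel (Fin.tail σ) (Fin.tail x) (Fin.tail y) := fun i => h i.succ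

lemma domrel_cons {s : ℕ} {σ : Fin (s+1) → Bool} {x y : Fin (s+1) → ℝ}
    (h0 : if σ 0 then y 0 < x 0 else y 0 ≤ x 0)
    (h : DomRel (Fin.tail σ) (Fin.tail x) (Fin.tail y)) : DomRel σ x y := by
  intro i
  refine Fin.cases ?_ ?_ i
  · exact h0
  · intro j; exact h j

lemma filter_disjSum_card {ι κ : Type} [DecidableEq ι] [DecidableEq κ]
    (A : Finset ι) (B : Finset κ) (q : ι ⊕ κ → Prop) [DecidablePred q] :
    ((A.disjSum B).filter q).card =
      (A.filter (fun i => q (Sum.inl i))).card + (B.filter (fun j => q (Sum.inr j))).card := by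
  rw [← Finset.card_disjSum]
  congr 1
  ext x
  cases x with
  | inl i => simp
  | inr j => simp

lemma key_bound (k : ℕ) : ∀ (s : ℕ) (σ : Fin s → Bool) (ι κ : Type) [DecidableEq ι]
    [DecidableEq κ] (p : ι → Fin s → ℝ) (c : κ → Fin s → ℝ) (A : Finset ι) (B : Finset κ),
    (¬ ∃ (A' : Finset ι) (B' : Finset κ), A' ⊆ A ∧ B' ⊆ B ∧ A'.card = k ∧ B'.card = k ∧
      ∀ i ∈ A', ∀ j ∈ B', DomRel σ (p i) (c j)) →
    ((A ×ˢ B).filter fun z => DomRel σ (p z.1) (c z.2)).card ≤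
      k * 2 ^ s * (A.card + B.card) * Nat.log 2 (A.card + B.card) ^ s := by
  intro s
  induction s with
  | zero =>
    intro σ ι κ _ _ p c A B hfree
    have hrel : ∀ (x y : Fin 0 → ℝ), DomRel σ x y := fun x y i => i.elim0
    have hor : A.card < k ∨ B.card < k := by
      by_contra h
      push_neg at h
      obtain ⟨A', hA's, hA'c⟩ := Finset.exists_subset_card_eq h.1
      obtain ⟨B', hB's, hB'c⟩ := Finset.exists_subset_card_eq h.2
      exact hfree ⟨A', B', hA's, hB's, hA'c, hB'c, fun i _ j _ => hrel _ _⟩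
    have hfull : ((A ×ˢ B).filter fun z => DomRel σ (p z.1) (c z.2)) = A ×ˢ B :=
      Finset.filter_true_of_mem (fun z _ => hrel _ _)
    rw [hfull, Finset.card_product]
    simp only [pow_zero, mul_one]
    rcases hor with h | h
    · calc A.card * B.card ≤ k * B.card := Nat.mul_le_mul_right _ h.le
      _ ≤ k * (A.card + B.card) := Nat.mul_le_mul_left _ (Nat.le_add_left _ _)
    · calc A.card * B.card ≤ A.card * k := Nat.mul_le_mul_left _ h.le
      _ = k * A.card := mul_comm _ _
      _ ≤ k * (A.card + B.card) := Nat.mul_le_mul_left _ (Nat.le_add_right _ _)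
  | succ s ih =>
    intro σ ι κ _ _ p c A B hfree
    suffices H : ∀ (n : ℕ) (A : Finset ι) (B : Finset κ), A.card + B.card = n →
        (¬ ∃ (A' : Finset ι) (B' : Finset κ), A' ⊆ A ∧ B' ⊆ B ∧ A'.card = k ∧ B'.card = k ∧
          ∀ i ∈ A', ∀ j ∈ B', DomRel σ (p i) (c j)) →
        ((A ×ˢ B).filter fun z => DomRel σ (p z.1) (c z.2)).card ≤
          k * 2 ^ (s+1) * n * Nat.log 2 n ^ (s+1) by
      exact H _ A B rfl hfree
    intro n
    induction n using Nat.strong_induction_on with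
    | _ n IH =>
    intro A B hn hfr
    by_cases hn2 : n < 2
    · have h01 : A.card = 0 ∨ B.card = 0 := by omega
      rcases h01 with h | h
      · rw [Finset.card_eq_zero.1 h]; simp
      · rw [Finset.card_eq_zero.1 h]; simp
    push_neg at hn2
    have hSne : (A.disjSum B).Nonempty := by
      rw [← Finset.card_pos, Finset.card_disjSum, hn]; omega
    obtain ⟨t, hL, hR⟩ := median_split (A.disjSum B)
      (Sum.elim (fun i => p i 0) (fun j => c j 0)) hSne
    rw [filter_disjSum_card] at hL hR
    simp only [Sum.elim_inl, Sum.elim_inr, Finset.card_disjSum, hn] at hL hR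
    set AL := A.filter (fun i => p i 0 < t) with hAL
    set AR := A.filter (fun i => t < p i 0) with hAR
    set BL := B.filter (fun j => c j 0 < t) with hBL
    set BR := B.filter (fun j => t < c j 0) with hBR
    set A1 := A.filter (fun i => t ≤ p i 0) with hA1
    set A2 := A.filter (fun i => if σ 0 then t < p i 0 else t ≤ p i 0) with hA2
    set B2 := B.filter (fun j => c j 0 = t) with hB2
    set Inc := (A ×ˢ B).filter (fun z => DomRel σ (p z.1) (c z.2)) with hInc
    set I1 := Inc.filter (fun z => z.1 ∈ AL ∧ z.2 ∈ BL) with hI1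
    set Irest := Inc.filter (fun z => ¬(z.1 ∈ AL ∧ z.2 ∈ BL)) with hIrest
    set I2 := Irest.filter (fun z => z.1 ∈ AR ∧ z.2 ∈ BR) with hI2
    set I3 := Irest.filter (fun z => ¬(z.1 ∈ AR ∧ z.2 ∈ BR)) with hI3
    set IA := (A1 ×ˢ BL).filter (fun z => DomRel (Fin.tail σ) (Fin.tail (p z.1)) (Fin.tail (c z.2))) with hIA
    set IB := (A2 ×ˢ B2).filter (fun z => DomRel (Fin.tail σ) (Fin.tail (p z.1)) (Fin.tail (c z.2))) with hIB
    have hc1 : Inc.card = I1.card + Irest.card :=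
      (Finset.card_filter_add_card_filter_not _).symm
    have hc2 : Irest.card = I2.card + I3.card :=
      (Finset.card_filter_add_card_filter_not _).symm
    -- I1 is the incidence set of the (AL, BL) subconfiguration
    have hI1eq : I1 = (AL ×ˢ BL).filter (fun z => DomRel σ (p z.1) (c z.2)) := by
      ext z
      simp only [hI1, hInc, Finset.mem_filter, Finset.mem_product, hAL, hBL]
      tauto
    have hI2sub : I2 ⊆ (AR ×ˢ BR).filter (fun z => DomRel σ (p z.1) (c z.2)) := by
      intro z hz
      simp only [hI2, hIrest, hInc, Finset.mem_filter, Finset.mem_product] at hz ⊢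
      tauto
    -- cross incidences
    have hI3sub : I3 ⊆ IA ∪ IB := by
      intro z hz
      simp only [hI3, hIrest, hInc, Finset.mem_filter, Finset.mem_product] at hz
      obtain ⟨⟨⟨⟨hzA, hzB⟩, hzR⟩, hnotL⟩, hnotR⟩ := hz
      have h0 := hzR 0
      have htl : DomRel (Fin.tail σ) (Fin.tail (p z.1)) (Fin.tail (c z.2)) := domrel_tail hzR
      rcases lt_trichotomy (c z.2 0) t with hc | hc | hc
      · have hz2 : z.2 ∈ BL := Finset.mem_filter.2 ⟨hzB, hc⟩
        have hz1 : t ≤ p z.1 0 := by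
          by_contra hlt
          exact hnotL ⟨Finset.mem_filter.2 ⟨hzA, not_le.1 hlt⟩, hz2⟩
        exact Finset.mem_union_left _ (Finset.mem_filter.2
          ⟨Finset.mem_product.2 ⟨Finset.mem_filter.2 ⟨hzA, hz1⟩, hz2⟩, htl⟩)
      · refine Finset.mem_union_right _ (Finset.mem_filter.2
          ⟨Finset.mem_product.2 ⟨Finset.mem_filter.2 ⟨hzA, ?_⟩,
            Finset.mem_filter.2 ⟨hzB, hc⟩⟩, htl⟩)
        rcases hσ0 : σ 0 with _ | _ <;> simp only [hσ0] at h0 ⊢ <;> simp at h0 ⊢ <;>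
          linarith [h0]
      · exfalso
        have hz2 : z.2 ∈ BR := Finset.mem_filter.2 ⟨hzB, hc⟩
        have hz1 : p z.1 0 ≤ t := by
          by_contra hlt
          exact hnotR ⟨Finset.mem_filter.2 ⟨hzA, not_le.1 hlt⟩, hz2⟩
        have : c z.2 0 ≤ p z.1 0 := by
          rcases hσ0 : σ 0 with _ | _ <;> simp only [hσ0] at h0 <;> simp at h0 <;> linarith
        linarith
    -- K_{k,k}-freeness of subconfigurations
    have hfrLL : ¬ ∃ (A' : Finset ι) (B' : Finset κ), A' ⊆ AL ∧ B' ⊆ BL ∧ A'.card = k ∧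
        B'.card = k ∧ ∀ i ∈ A', ∀ j ∈ B', DomRel σ (p i) (c j) := by
      rintro ⟨A', B', h1, h2, h3, h4, h5⟩
      exact hfr ⟨A', B', h1.trans (Finset.filter_subset _ _),
        h2.trans (Finset.filter_subset _ _), h3, h4, h5⟩
    have hfrRR : ¬ ∃ (A' : Finset ι) (B' : Finset κ), A' ⊆ AR ∧ B' ⊆ BR ∧ A'.card = k ∧
        B'.card = k ∧ ∀ i ∈ A', ∀ j ∈ B', DomRel σ (p i) (c j) := by
      rintro ⟨A', B', h1, h2, h3, h4, h5⟩
      exact hfr ⟨A', B', h1.trans (Finset.filter_subset _ _),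
        h2.trans (Finset.filter_subset _ _), h3, h4, h5⟩
    have hfrA : ¬ ∃ (A' : Finset ι) (B' : Finset κ), A' ⊆ A1 ∧ B' ⊆ BL ∧ A'.card = k ∧
        B'.card = k ∧ ∀ i ∈ A', ∀ j ∈ B',
          DomRel (Fin.tail σ) (Fin.tail (p i)) (Fin.tail (c j)) := by
      rintro ⟨A', B', h1, h2, h3, h4, h5⟩
      refine hfr ⟨A', B', h1.trans (Finset.filter_subset _ _),
        h2.trans (Finset.filter_subset _ _), h3, h4, fun i hi j hj => ?_⟩
      refine domrel_cons ?_ (h5 i hi j hj)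
      have hip : t ≤ p i 0 := (Finset.mem_filter.1 (h1 hi)).2
      have hjc : c j 0 < t := (Finset.mem_filter.1 (h2 hj)).2
      rcases hσ0 : σ 0 with _ | _ <;> simp <;> linarith
    have hfrB : ¬ ∃ (A' : Finset ι) (B' : Finset κ), A' ⊆ A2 ∧ B' ⊆ B2 ∧ A'.card = k ∧
        B'.card = k ∧ ∀ i ∈ A', ∀ j ∈ B',
          DomRel (Fin.tail σ) (Fin.tail (p i)) (Fin.tail (c j)) := by
      rintro ⟨A', B', h1, h2, h3, h4, h5⟩
      refine hfr ⟨A', B', h1.trans (Finset.filter_subset _ _),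
        h2.trans (Finset.filter_subset _ _), h3, h4, fun i hi j hj => ?_⟩
      refine domrel_cons ?_ (h5 i hi j hj)
      have hip := (Finset.mem_filter.1 (h1 hi)).2
      have hjc : c j 0 = t := (Finset.mem_filter.1 (h2 hj)).2
      rcases hσ0 : σ 0 with _ | _ <;> simp only [hσ0] at hip ⊢ <;> simp at hip ⊢ <;> linarith
    -- apply inductive hypotheses
    set m := Nat.log 2 n with hm
    have hm1 : 1 ≤ m := Nat.log_pos (by norm_num) (by omega)
    have hnL : AL.card + BL.card ≤ n / 2 := hL
    have hnR : AR.card + BR.card ≤ n / 2 := hR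
    have hlogL : Nat.log 2 (AL.card + BL.card) ≤ m - 1 := by
      calc Nat.log 2 (AL.card + BL.card) ≤ Nat.log 2 (n / 2) := Nat.log_mono_right hnL
      _ = m - 1 := Nat.log_div_base 2 n
    have hlogR : Nat.log 2 (AR.card + BR.card) ≤ m - 1 := by
      calc Nat.log 2 (AR.card + BR.card) ≤ Nat.log 2 (n / 2) := Nat.log_mono_right hnR
      _ = m - 1 := Nat.log_div_base 2 n
    have e1 : I1.card ≤ k * 2 ^ (s+1) * (AL.card + BL.card) * (m - 1) ^ (s+1) := by
      have b1 : ((AL ×ˢ BL).filter fun z => DomRel σ (p z.1) (c z.2)).card ≤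
          k * 2 ^ (s+1) * (AL.card + BL.card) * Nat.log 2 (AL.card + BL.card) ^ (s+1) :=
        IH (AL.card + BL.card) (by omega) AL BL rfl hfrLL
      rw [hI1eq]
      exact le_trans b1 (Nat.mul_le_mul_left _ (Nat.pow_le_pow_left hlogL _))
    have e2 : I2.card ≤ k * 2 ^ (s+1) * (AR.card + BR.card) * (m - 1) ^ (s+1) := by
      have b2 : ((AR ×ˢ BR).filter fun z => DomRel σ (p z.1) (c z.2)).card ≤
          k * 2 ^ (s+1) * (AR.card + BR.card) * Nat.log 2 (AR.card + BR.card) ^ (s+1) :=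
        IH (AR.card + BR.card) (by omega) AR BR rfl hfrRR
      exact le_trans (Finset.card_le_card hI2sub)
        (le_trans b2 (Nat.mul_le_mul_left _ (Nat.pow_le_pow_left hlogR _)))
    have eA : IA.card ≤ k * 2 ^ s * n * m ^ s := by
      have hle : A1.card + BL.card ≤ n := by
        rw [← hn]
        exact Nat.add_le_add (Finset.card_filter_le _ _) (Finset.card_filter_le _ _)
      have bA : IA.card ≤ k * 2 ^ s * (A1.card + BL.card) *
          Nat.log 2 (A1.card + BL.card) ^ s :=
        ih (Fin.tail σ) ι κ (fun i => Fin.tail (p i)) (fun j => Fin.tail (c j)) A1 BL hfrA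
      exact le_trans bA (Nat.mul_le_mul (Nat.mul_le_mul_left _ hle)
        (Nat.pow_le_pow_left (Nat.log_mono_right hle) _))
    have eB : IB.card ≤ k * 2 ^ s * n * m ^ s := by
      have hle : A2.card + B2.card ≤ n := by
        rw [← hn]
        exact Nat.add_le_add (Finset.card_filter_le _ _) (Finset.card_filter_le _ _)
      have bB : IB.card ≤ k * 2 ^ s * (A2.card + B2.card) *
          Nat.log 2 (A2.card + B2.card) ^ s :=
        ih (Fin.tail σ) ι κ (fun i => Fin.tail (p i)) (fun j => Fin.tail (c j)) A2 B2 hfrB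
      exact le_trans bB (Nat.mul_le_mul (Nat.mul_le_mul_left _ hle)
        (Nat.pow_le_pow_left (Nat.log_mono_right hle) _))
    have e3 : I3.card ≤ IA.card + IB.card :=
      le_trans (Finset.card_le_card hI3sub) (Finset.card_union_le _ _)
    -- final arithmetic
    have hkey : (m - 1) ^ (s+1) + m ^ s ≤ m ^ (s+1) := by
      obtain ⟨m', hm'⟩ : ∃ m', m = m' + 1 := ⟨m - 1, by omega⟩
      rw [hm']
      simp only [Nat.add_sub_cancel]
      have hp : m' ^ s ≤ (m' + 1) ^ s := Nat.pow_le_pow_left (by omega) _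
      calc m' ^ (s+1) + (m'+1) ^ s = m' ^ s * m' + (m'+1) ^ s := by ring
      _ ≤ (m'+1) ^ s * m' + (m'+1) ^ s := by
        exact Nat.add_le_add_right (Nat.mul_le_mul_right _ hp) _
      _ = (m'+1) ^ (s+1) := by ring
    calc Inc.card = I1.card + I2.card + I3.card := by omega
    _ ≤ k * 2 ^ (s+1) * (AL.card + BL.card) * (m - 1) ^ (s+1) +
        k * 2 ^ (s+1) * (AR.card + BR.card) * (m - 1) ^ (s+1) +
        (k * 2 ^ s * n * m ^ s + k * 2 ^ s * n * m ^ s) := by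
      refine Nat.add_le_add (Nat.add_le_add e1 e2) (le_trans e3 (Nat.add_le_add eA eB))
    _ ≤ k * 2 ^ (s+1) * n * (m - 1) ^ (s+1) +
        (k * 2 ^ s * n * m ^ s + k * 2 ^ s * n * m ^ s) := by
      have : AL.card + BL.card + (AR.card + BR.card) ≤ n := by omega
      have h' : k * 2 ^ (s+1) * (AL.card + BL.card) * (m - 1) ^ (s+1) +
          k * 2 ^ (s+1) * (AR.card + BR.card) * (m - 1) ^ (s+1) ≤
          k * 2 ^ (s+1) * n * (m - 1) ^ (s+1) := by
        calc k * 2 ^ (s+1) * (AL.card + BL.card) * (m - 1) ^ (s+1) +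
            k * 2 ^ (s+1) * (AR.card + BR.card) * (m - 1) ^ (s+1) =
            k * 2 ^ (s+1) * ((AL.card + BL.card) + (AR.card + BR.card)) *
              (m - 1) ^ (s+1) := by ring
        _ ≤ k * 2 ^ (s+1) * n * (m - 1) ^ (s+1) :=
          Nat.mul_le_mul_right _ (Nat.mul_le_mul_left _ this)
      omega
    _ = k * 2 ^ (s+1) * n * ((m - 1) ^ (s+1) + m ^ s) := by ring
    _ ≤ k * 2 ^ (s+1) * n * m ^ (s+1) := Nat.mul_le_mul_left _ hkey

/-- For every `s, k` there is `α` such that: for any `d`, any half-spaces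
`H₁, …, H_s ⊆ ℝ^d` (each open or closed), any finite set `P` of points and any finite
list `F` (of length `n₂`) of polytopes cut out by translates of `H₁, …, H_s`, if the
incidence graph on `P × F` is `K_{k,k}`-free then the number of incidences is at most
`α · n · log^s n`, where `n = |P| + n₂`. -/
theorem polytope_incidence_bound (s k : ℕ) :
    ∃ α : ℝ, ∀ (d : ℕ) (a : Fin s → Fin d → ℝ) (b : Fin s → ℝ) (opn : Fin s → Bool)
      (P : Finset (Fin d → ℝ)) (n₂ : ℕ) (F : Fin n₂ → Fin s → Fin d → ℝ),
      (¬ ∃ (P' : Finset (Fin d → ℝ)) (Q' : Finset (Fin n₂)),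
          P' ⊆ P ∧ P'.card = k ∧ Q'.card = k ∧
          ∀ p ∈ P', ∀ q ∈ Q', p ∈ translatedPolytope a b opn (F q)) →
      (Set.ncard {pq : (Fin d → ℝ) × Fin n₂ |
          pq.1 ∈ P ∧ pq.1 ∈ translatedPolytope a b opn (F pq.2)} : ℝ) ≤
        α * ((P.card + n₂ : ℕ) : ℝ) * Real.log ((P.card + n₂ : ℕ) : ℝ) ^ s := by
  refine ⟨(k * 2 ^ s : ℝ) / (Real.log 2) ^ s, ?_⟩
  intro d a b opn P n₂ F hfree
  set φ : (Fin d → ℝ) → Fin s → ℝ := fun x i => ∑ j, a i j * x j with hφ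
  set ψ : Fin n₂ → Fin s → ℝ := fun q i => b i + ∑ j, a i j * F q i j with hψ
  have hmem : ∀ (x : Fin d → ℝ) (q : Fin n₂),
      x ∈ translatedPolytope a b opn (F q) ↔ DomRel opn (φ x) (ψ q) := by
    intro x q
    simp only [translatedPolytope, halfSpace, Set.mem_iInter, Set.mem_setOf_eq, DomRel, hφ, hψ]
    refine forall_congr' fun i => ?_
    have hsum : (∑ j, a i j * (x j - F q i j)) =
        (∑ j, a i j * x j) - ∑ j, a i j * F q i j := by
      rw [← Finset.sum_sub_distrib]
      exact Finset.sum_congr rfl fun j _ => by ring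
    cases hop : opn i <;> simp <;> rw [hsum] <;>
      constructor <;> intro h <;> linarith
  have hset : {pq : (Fin d → ℝ) × Fin n₂ |
      pq.1 ∈ P ∧ pq.1 ∈ translatedPolytope a b opn (F pq.2)} =
      ↑((P ×ˢ (Finset.univ : Finset (Fin n₂))).filter
        (fun z => DomRel opn (φ z.1) (ψ z.2))) := by
    ext z
    simp only [Set.mem_setOf_eq, Finset.coe_filter, Finset.mem_product, Finset.mem_univ,
      and_true, hmem z.1 z.2]
  have hfree' : ¬ ∃ (A' : Finset (Fin d → ℝ)) (B' : Finset (Fin n₂)),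
      A' ⊆ P ∧ B' ⊆ (Finset.univ : Finset (Fin n₂)) ∧ A'.card = k ∧ B'.card = k ∧
      ∀ i ∈ A', ∀ j ∈ B', DomRel opn (φ i) (ψ j) := by
    rintro ⟨A', B', h1, h2, h3, h4, h5⟩
    exact hfree ⟨A', B', h1, h3, h4, fun p hp q hq => (hmem p q).2 (h5 p hp q hq)⟩
  have hkey := key_bound k s opn (Fin d → ℝ) (Fin n₂) φ ψ P Finset.univ hfree'
  rw [hset, Set.ncard_coe_finset]
  have hcardu : (Finset.univ : Finset (Fin n₂)).card = n₂ := by simp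
  rw [hcardu] at hkey
  set N := P.card + n₂ with hN
  have hcast : (((P ×ˢ (Finset.univ : Finset (Fin n₂))).filter
      (fun z => DomRel opn (φ z.1) (ψ z.2))).card : ℝ) ≤
      (k : ℝ) * 2 ^ s * N * (Nat.log 2 N : ℝ) ^ s := by
    have := (Nat.cast_le (α := ℝ)).2 hkey
    push_cast at this
    exact this
  refine le_trans hcast ?_
  have hlog2 : (0:ℝ) < Real.log 2 := Real.log_pos (by norm_num)
  have hnat : (Nat.log 2 N : ℝ) ≤ Real.logb 2 N := Real.natLog_le_logb N 2
  have hpow : (Nat.log 2 N : ℝ) ^ s ≤ Real.logb 2 (N : ℝ) ^ s :=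
    pow_le_pow_left₀ (by positivity) hnat s
  have heq : (k : ℝ) * 2 ^ s / Real.log 2 ^ s * (N : ℝ) * Real.log (N : ℝ) ^ s =
      (k : ℝ) * 2 ^ s * N * Real.logb 2 (N : ℝ) ^ s := by
    rw [Real.logb, div_pow]
    field_simp
  rw [heq]
  have : (0:ℝ) ≤ (k : ℝ) * 2 ^ s * N := by positivity
  exact mul_le_mul_of_nonneg_left hpow this
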